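/- If P is an Eulerian graded poset with 0̂, then the dual suspension Σ*(P) is Eulerian. Moreover, if P is a binomial poset with factorial function B, then Σ*(P) is a Sheffer poset with Sheffer factorial function D(n) = 2·B(n−1) for n ≥ 2. -/

import Mathlib

open scoped Classical

/-! ## Basic notions: saturated chains, rank functions, Euler–Poincaré, Eulerian,
binomial / Sheffer / triangular posets. -/

/-- A saturated (maximal) chain from `x` to `y` in a poset, encoded as a list. -/
def IsSatChain {α : Type*} [PartialOrder α] (x y : α) (l : List α) : Prop :=
  l.Chain' (· ⋖ ·) ∧ l.head? = some x ∧ l.getLast? = some y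

/-- The number of maximal chains of the interval `[x, y]`. -/
noncomputable def chainCount {α : Type*} [PartialOrder α] (x y : α) : ℕ :=
  Nat.card {l : List α // IsSatChain x y l}

/-- `rk` is a rank function for a graded poset with `⊥`:
the bottom has rank `0` and ranks increase by one across cover relations. -/
def IsRankFunction {α : Type*} [PartialOrder α] [OrderBot α] (rk : α → ℕ) : Prop :=
  rk ⊥ = 0 ∧ ∀ x y : α, x ⋖ y → rk y = rk x + 1

/-- The interval `[x, y]` satisfies the Euler–Poincaré relation: it has as many elements
of even rank as of odd rank. -/
def EulerPoincare {α : Type*} [Fintype α] [PartialOrder α] (rk : α → ℕ) (x y : α) : Prop :=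
  (Finset.univ.filter fun z => x ≤ z ∧ z ≤ y ∧ Even (rk z)).card =
    (Finset.univ.filter fun z => x ≤ z ∧ z ≤ y ∧ ¬ Even (rk z)).card

/-- A graded poset is Eulerian if every non-singleton interval satisfies
the Euler–Poincaré relation. -/
def IsEulerian {α : Type*} [Fintype α] [PartialOrder α] (rk : α → ℕ) : Prop :=
  ∀ x y : α, x < y → EulerPoincare rk x y

/-- A binomial poset: the number of maximal chains of an interval depends only
on its length, via the factorial function `B`. -/
def IsBinomial {α : Type*} [PartialOrder α] (rk : α → ℕ) (B : ℕ → ℕ) : Prop :=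
  ∀ x y : α, x ≤ y → chainCount x y = B (rk y - rk x)

/-- A Sheffer poset: Sheffer intervals `[⊥, y]` have `D (ρ y)` maximal chains and binomial
intervals `[x, y]` with `x ≠ ⊥` have `B (ρ y - ρ x)` maximal chains. -/
def IsSheffer {α : Type*} [PartialOrder α] [OrderBot α] (rk : α → ℕ) (B D : ℕ → ℕ) : Prop :=
  (∀ y : α, chainCount ⊥ y = D (rk y)) ∧
    (∀ x y : α, x ≠ ⊥ → x ≤ y → chainCount x y = B (rk y - rk x))

/-- A triangular poset: the number of maximal chains of `[x, y]` depends only on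
`ρ x` and `ρ y`. -/
def IsTriangular {α : Type*} [PartialOrder α] (rk : α → ℕ) (B : ℕ → ℕ → ℕ) : Prop :=
  ∀ x y : α, x ≤ y → chainCount x y = B (rk x) (rk y)

/-! ## Constructions: summations, dual suspension, butterfly posets, polygon face lattices. -/

/-- The proper part of a bounded poset. -/
abbrev ProperPart (Q : Type*) [PartialOrder Q] [OrderBot Q] [OrderTop Q] : Type _ :=
  {x : Q // x ≠ ⊥ ∧ x ≠ ⊤}

/-- The summation `⊞_{i} Q i` of a family of bounded posets: identify all the minimal
elements and all the maximal elements of the disjoint union of the `Q i`. -/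
abbrev FamSum {ι : Type*} (Q : ι → Type*) [∀ i, PartialOrder (Q i)] [∀ i, OrderBot (Q i)]
    [∀ i, OrderTop (Q i)] : Type _ :=
  WithBot (WithTop ((i : ι) × ProperPart (Q i)))

/-- The `k`-summation `⊞^k Q`: identify all the minimal elements and all the maximal
elements of `k` disjoint copies of `Q`. -/
abbrev KSum (k : ℕ) (Q : Type*) [PartialOrder Q] [OrderBot Q] [OrderTop Q] : Type _ :=
  FamSum (fun _ : Fin k => Q)

/-- The rank function of a `k`-summation, induced by a rank function on `Q`. -/
def ksumRk {k : ℕ} {Q : Type*} [PartialOrder Q] [OrderBot Q] [OrderTop Q] (rk : Q → ℕ) :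
    KSum k Q → ℕ :=
  WithBot.recBotCoe 0 (WithTop.recTopCoe (rk ⊤) (fun s => rk s.2.1))

/-- The underlying type of the dual suspension minus its bottom: two new atoms together
with the proper (non-bottom) part of `P`. -/
def DSuspMid (P : Type*) [PartialOrder P] [OrderBot P] : Type _ :=
  Fin 2 ⊕ {x : P // x ≠ ⊥}

instance DSuspMid.partialOrder (P : Type*) [PartialOrder P] [OrderBot P] :
    PartialOrder (DSuspMid P) where
  le a b :=
    match a, b with
    | .inl i, .inl j => i = j
    | .inl _, .inr _ => True
    | .inr _, .inl _ => False
    | .inr x, .inr y => x ≤ y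
  le_refl a := by cases a with
    | inl i => exact rfl
    | inr x => exact le_refl x.1
  le_trans a b c hab hbc := by
    cases a with
    | inl i =>
      cases c with
      | inl k =>
        cases b with
        | inl j => exact Eq.trans (hab : i = j) (hbc : j = k)
        | inr y => exact ((hbc : False)).elim
      | inr z => trivial
    | inr x =>
      cases b with
      | inl j => exact ((hab : False)).elim
      | inr y =>
        cases c with
        | inl k => exact ((hbc : False)).elim
        | inr z => exact le_trans (α := {x : P // x ≠ ⊥}) hab hbc
  le_antisymm a b hab hba := by
    cases a with
    | inl i =>
      cases b with
      | inl j => exact congrArg Sum.inl (hab : _ = _)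
      | inr y => exact ((hba : False)).elim
    | inr x =>
      cases b with
      | inl j => exact ((hab : False)).elim
      | inr y => exact congrArg Sum.inr (le_antisymm (α := {x : P // x ≠ ⊥}) hab hba)

/-- The dual suspension `Σ*(P)`: insert two new elements between `⊥` and the atoms of `P`. -/
abbrev DSusp (P : Type*) [PartialOrder P] [OrderBot P] : Type _ :=
  WithBot (DSuspMid P)

/-- The rank function of the dual suspension induced by a rank function on `P`. -/
def dsuspRk {P : Type*} [PartialOrder P] [OrderBot P] (rk : P → ℕ) : DSusp P → ℕ :=
  WithBot.recBotCoe 0 (Sum.elim (fun _ => 1) (fun x => rk x.1 + 1))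

noncomputable instance DSuspMid.fintype (P : Type*) [PartialOrder P] [OrderBot P] [Fintype P] :
    Fintype (DSuspMid P) := by
  unfold DSuspMid; infer_instance

instance DSuspMid.orderTop (P : Type*) [PartialOrder P] [OrderBot P] [OrderTop P] [Nontrivial P] :
    OrderTop (DSuspMid P) where
  top := Sum.inr ⟨⊤, fun h => by
    rcases exists_pair_ne P with ⟨a, b, hab⟩
    have ha : a = ⊤ := le_antisymm le_top (h.le.trans bot_le)
    have hb : b = ⊤ := le_antisymm le_top (h.le.trans bot_le)
    exact hab (ha.trans hb.symm)⟩
  le_top a := by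
    cases a with
    | inl i => trivial
    | inr x => exact le_top (α := P) (a := x.1)

/-- The butterfly poset `T n` of rank `n`: a `⊥`, a `⊤`, and two elements at each rank
`1, …, n - 1`; any two elements at consecutive ranks are comparable. -/
def Butterfly (n : ℕ) : Type :=
  {p : Fin (n + 1) × Fin 2 // ((p.1 : ℕ) = 0 ∨ (p.1 : ℕ) = n) → p.2 = 0}

namespace Butterfly

instance (n : ℕ) : PartialOrder (Butterfly n) where
  le p q := p = q ∨ (p.1.1 : ℕ) < (q.1.1 : ℕ)
  le_refl p := Or.inl rfl
  le_trans p q r h₁ h₂ := by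
    rcases h₁ with rfl | h₁
    · exact h₂
    · rcases h₂ with rfl | h₂
      · exact Or.inr h₁
      · exact Or.inr (h₁.trans h₂)
  le_antisymm p q h₁ h₂ := by
    rcases h₁ with rfl | h₁
    · rfl
    · rcases h₂ with rfl | h₂
      · rfl
      · exact absurd (h₁.trans h₂) (lt_irrefl _)

instance (n : ℕ) : OrderBot (Butterfly n) where
  bot := ⟨(0, 0), fun _ => rfl⟩
  bot_le p := by
    rcases Nat.eq_zero_or_pos (p.1.1 : ℕ) with h | h
    · left
      apply Subtype.ext
      have h2 : p.1.2 = 0 := p.2 (Or.inl (by exact_mod_cast h))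
      apply Prod.ext
      · exact (Fin.ext (by simpa using h.symm))
      · exact h2.symm
    · exact Or.inr (by simpa using h)

instance (n : ℕ) : OrderTop (Butterfly n) where
  top := ⟨(Fin.last n, 0), fun _ => rfl⟩
  le_top p := by
    rcases eq_or_lt_of_le (Nat.lt_succ_iff.mp p.1.1.isLt) with h | h
    · left
      apply Subtype.ext
      have h2 : p.1.2 = 0 := p.2 (Or.inr h)
      apply Prod.ext
      · exact (Fin.ext (by simpa using h))
      · exact h2
    · exact Or.inr (by simpa using h)

instance (n : ℕ) : Fintype (Butterfly n) := by
  unfold Butterfly; exact Subtype.fintype _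

/-- The rank function of the butterfly poset. -/
def rk {n : ℕ} (p : Butterfly n) : ℕ := p.1.1

end Butterfly

/-- The middle levels (vertices and edges) of the face lattice of a `q`-gon:
`(0, i)` is the `i`-th vertex and `(1, i)` is the edge joining vertices `i` and `i + 1`. -/
def PolyMid (q : ℕ) : Type := Fin 2 × Fin q

instance PolyMid.partialOrder (q : ℕ) : PartialOrder (PolyMid q) where
  le a b := a = b ∨ (a.1 = 0 ∧ b.1 = 1 ∧ (a.2 = b.2 ∨ (a.2 : ℕ) = ((b.2 : ℕ) + 1) % q))
  le_refl a := Or.inl rfl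
  le_trans a b c h₁ h₂ := by
    rcases h₁ with rfl | h₁
    · exact h₂
    · rcases h₂ with rfl | h₂
      · exact Or.inr h₁
      · obtain ⟨hb, _⟩ := h₂
        rw [h₁.2.1] at hb
        exact absurd hb (by decide)
  le_antisymm a b h₁ h₂ := by
    rcases h₁ with rfl | h₁
    · rfl
    · rcases h₂ with rfl | h₂
      · rfl
      · obtain ⟨hb, _⟩ := h₂
        rw [h₁.2.1] at hb
        exact absurd hb (by decide)

/-- The face lattice `P_q` of a `q`-gon. -/
abbrev PolygonFaceLattice (q : ℕ) : Type := WithBot (WithTop (PolyMid q))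

noncomputable instance ProperPart.fintype (Q : Type*) [Fintype Q] [PartialOrder Q]
    [OrderBot Q] [OrderTop Q] : Fintype (ProperPart Q) :=
  Subtype.fintype _

instance WithTop.instFintypeOfFintype {X : Type*} [Fintype X] : Fintype (WithTop X) :=
  inferInstanceAs (Fintype (Option X))

instance WithBot.instFintypeOfFintype {X : Type*} [Fintype X] : Fintype (WithBot X) :=
  inferInstanceAs (Fintype (Option X))

section ChainLemmas
variable {α : Type*} {β : Type*} [PartialOrder α] [PartialOrder β]

lemma satChain_pairwise {x y : α} {l : List α} (h : IsSatChain x y l) :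
    l.Pairwise (· < ·) :=
  List.isChain_iff_pairwise.mp (h.1.imp fun _ _ hab => hab.lt)

lemma satChain_cons {x y : α} {l : List α} (h : IsSatChain x y l) :
    ∃ t, l = x :: t := by
  cases l with
  | nil => simpa using h.2.1
  | cons a t =>
    obtain rfl : a = x := by simpa using h.2.1
    exact ⟨t, rfl⟩

lemma satChain_bounds {x y : α} {l : List α} (h : IsSatChain x y l) :
    ∀ z ∈ l, x ≤ z ∧ z ≤ y := by
  have hp := satChain_pairwise h
  obtain ⟨t, rfl⟩ := satChain_cons h
  intro z hz
  constructor
  · rcases List.mem_cons.mp hz with rfl | hz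
    · exact le_rfl
    · exact ((List.pairwise_cons.mp hp).1 z hz).le
  · have hrev : (x :: t).reverse.Pairwise (· > ·) := by
      rw [List.pairwise_reverse]; exact hp
    have hh : (x :: t).reverse.head? = some y := by
      rw [List.head?_reverse]; exact h.2.2
    have hz' : z ∈ (x :: t).reverse := List.mem_reverse.mpr hz
    obtain ⟨t', ht'⟩ : ∃ t', (x :: t).reverse = y :: t' := by
      cases hrl : (x :: t).reverse with
      | nil => rw [hrl] at hh; simp at hh
      | cons a t' =>
        rw [hrl] at hh
        simp only [List.head?_cons, Option.some.injEq] at hh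
        exact ⟨t', by rw [hh]⟩
    rw [ht'] at hz' hrev
    rcases List.mem_cons.mp hz' with rfl | hz'
    · exact le_rfl
    · exact ((List.pairwise_cons.mp hrev).1 z hz').le

lemma satChain_le {x y : α} {l : List α} (h : IsSatChain x y l) : x ≤ y := by
  obtain ⟨t, rfl⟩ := satChain_cons h
  exact (satChain_bounds h x List.mem_cons_self).2

lemma satChain_singleton (x : α) : IsSatChain x x [x] :=
  ⟨List.isChain_singleton x, rfl, rfl⟩

lemma satChain_self_eq {x : α} {l : List α} (h : IsSatChain x x l) : l = [x] := by
  obtain ⟨t, rfl⟩ := satChain_cons h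
  cases t with
  | nil => rfl
  | cons b t' =>
    exfalso
    have hb : x < b := ((List.pairwise_cons.mp (satChain_pairwise h)).1 b (by simp))
    exact hb.not_ge (satChain_bounds h b (by simp)).2

lemma chainCount_eq_one_of_unique {x y : α} (l0 : List α) (h0 : IsSatChain x y l0)
    (hu : ∀ l, IsSatChain x y l → l = l0) : chainCount x y = 1 := by
  rw [chainCount, Nat.card_eq_one_iff_unique]
  exact ⟨⟨fun a b => Subtype.ext ((hu _ a.2).trans (hu _ b.2).symm)⟩, ⟨⟨l0, h0⟩⟩⟩

lemma chainCount_self (x : α) : chainCount x x = 1 :=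
  chainCount_eq_one_of_unique [x] (satChain_singleton x) fun _ h => satChain_self_eq h

lemma chainCount_congr {x y : α} {x' y' : β} (f : α → β) (g : β → α)
    (hf : ∀ l, IsSatChain x y l → IsSatChain x' y' (l.map f))
    (hg : ∀ l, IsSatChain x' y' l → IsSatChain x y (l.map g))
    (hgf : ∀ l, IsSatChain x y l → ∀ z ∈ l, g (f z) = z)
    (hfg : ∀ l, IsSatChain x' y' l → ∀ z ∈ l, f (g z) = z) :
    chainCount x y = chainCount x' y' := by
  refine Nat.card_congr ⟨fun p => ⟨p.1.map f, hf _ p.2⟩, fun p => ⟨p.1.map g, hg _ p.2⟩, ?_, ?_⟩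
  · rintro ⟨l, h⟩
    refine Subtype.ext ?_
    simp only [List.map_map]
    exact (List.map_congr_left (hgf l h)).trans l.map_id
  · rintro ⟨l, h⟩
    refine Subtype.ext ?_
    simp only [List.map_map]
    exact (List.map_congr_left (hfg l h)).trans l.map_id

omit [PartialOrder α] [PartialOrder β] in
lemma chain'_map_mem {R : α → α → Prop} {S : β → β → Prop} (f : α → β) {l : List α}
    (hmem : ∀ a ∈ l, ∀ b ∈ l, R a b → S (f a) (f b)) (hc : List.Chain' R l) :
    List.Chain' S (l.map f) := by
  induction l with
  | nil => exact List.isChain_nil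
  | cons a t ih =>
    cases t with
    | nil => exact List.isChain_singleton _
    | cons b t' =>
      simp only [List.Chain', List.isChain_cons_cons] at hc
      simp only [List.map_cons, List.Chain', List.isChain_cons_cons]
      refine ⟨hmem a (by simp) b (by simp) hc.1, ?_⟩
      rw [← List.map_cons]
      exact ih (fun u hu v hv h => hmem u (List.mem_cons_of_mem a hu)
        v (List.mem_cons_of_mem a hv) h) hc.2

lemma satChain_cons_decomp {x y : α} {t : List α} (h : IsSatChain x y (x :: t)) :
    (t = [] ∧ x = y) ∨ ∃ b t', t = b :: t' ∧ x ⋖ b ∧ IsSatChain b y t := by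
  cases t with
  | nil => exact Or.inl ⟨rfl, by simpa using h.2.2⟩
  | cons b t' =>
    refine Or.inr ⟨b, t', rfl, (List.isChain_cons_cons.mp h.1).1, (List.isChain_cons_cons.mp h.1).2, rfl, ?_⟩
    simpa [List.getLast?_cons_cons] using h.2.2

lemma satChain_of_cons {x b y : α} {t : List α} (hcov : x ⋖ b) (ht : IsSatChain b y t) :
    IsSatChain x y (x :: t) := by
  obtain ⟨t', rfl⟩ := satChain_cons ht
  exact ⟨List.isChain_cons_cons.mpr ⟨hcov, ht.1⟩, rfl, by simpa [List.getLast?_cons_cons] using ht.2.2⟩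

end ChainLemmas
section DSuspLemmas
variable {P : Type*} [PartialOrder P] [OrderBot P]

/-- The two new atoms, as elements of `DSuspMid P`. -/
abbrev dsA (P : Type*) [PartialOrder P] [OrderBot P] (i : Fin 2) : DSuspMid P := Sum.inl i

/-- The old (non-bottom) elements, as elements of `DSuspMid P`. -/
abbrev dsE (P : Type*) [PartialOrder P] [OrderBot P] (x : {x : P // x ≠ ⊥}) : DSuspMid P :=
  Sum.inr x

lemma mid_inl_le_inr {i : Fin 2} {x : {x : P // x ≠ ⊥}} : dsA P i ≤ dsE P x := trivial

lemma mid_inl_le_inl_iff {i j : Fin 2} : dsA P i ≤ dsA P j ↔ i = j := Iff.rfl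

lemma mid_not_inr_le_inl {i : Fin 2} {x : {x : P // x ≠ ⊥}} : ¬ dsE P x ≤ dsA P i := fun h => h

lemma mid_inr_le_inr_iff {x y : {x : P // x ≠ ⊥}} : dsE P x ≤ dsE P y ↔ x.1 ≤ y.1 := Iff.rfl

lemma mid_inl_lt_inr {i : Fin 2} {x : {x : P // x ≠ ⊥}} : dsA P i < dsE P x :=
  lt_of_le_not_ge mid_inl_le_inr mid_not_inr_le_inl

lemma mid_inr_lt_inr_iff {x y : {x : P // x ≠ ⊥}} : dsE P x < dsE P y ↔ x.1 < y.1 := by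
  constructor
  · intro h
    exact lt_of_le_not_ge (mid_inr_le_inr_iff.mp h.le)
      (fun hh => h.not_ge (mid_inr_le_inr_iff.mpr hh))
  · intro h
    exact lt_of_le_not_ge (mid_inr_le_inr_iff.mpr h.le)
      (fun hh => h.not_ge (mid_inr_le_inr_iff.mp hh))

lemma mid_covBy_inl_inr {i : Fin 2} {x : {x : P // x ≠ ⊥}} :
    dsA P i ⋖ dsE P x ↔ (⊥ : P) ⋖ x.1 := by
  constructor
  · intro h
    refine ⟨bot_lt_iff_ne_bot.mpr x.2, fun t ht1 ht2 => ?_⟩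
    exact h.2 (show dsA P i < dsE P ⟨t, ht1.ne'⟩ from mid_inl_lt_inr)
      (show dsE P ⟨t, ht1.ne'⟩ < dsE P x from mid_inr_lt_inr_iff.mpr ht2)
  · intro h
    refine ⟨mid_inl_lt_inr, fun c hc1 hc2 => ?_⟩
    cases c with
    | inl j =>
      obtain rfl : i = j := hc1.le
      exact lt_irrefl _ hc1
    | inr w =>
      have h1 : (⊥ : P) < w.1 := bot_lt_iff_ne_bot.mpr w.2
      have h2 : w.1 < x.1 := lt_of_le_not_ge (mid_inr_le_inr_iff.mp hc2.le)
        (fun hh => hc2.not_ge (mid_inr_le_inr_iff.mpr hh))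
      exact h.2 h1 h2

lemma mid_covBy_inr_inr {x y : {x : P // x ≠ ⊥}} :
    dsE P x ⋖ dsE P y ↔ x.1 ⋖ y.1 := by
  constructor
  · intro h
    refine ⟨mid_inr_lt_inr_iff.mp h.1, fun t ht1 ht2 => ?_⟩
    have htb : t ≠ ⊥ := ne_bot_of_gt ((bot_lt_iff_ne_bot.mpr x.2).trans ht1)
    exact h.2 (show dsE P x < dsE P ⟨t, htb⟩ from mid_inr_lt_inr_iff.mpr ht1)
      (show dsE P ⟨t, htb⟩ < dsE P y from mid_inr_lt_inr_iff.mpr ht2)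
  · intro h
    refine ⟨mid_inr_lt_inr_iff.mpr h.1, fun c hc1 hc2 => ?_⟩
    cases c with
    | inl j => exact mid_not_inr_le_inl hc1.le
    | inr w => exact h.2 (mid_inr_lt_inr_iff.mp hc1) (mid_inr_lt_inr_iff.mp hc2)

lemma isMin_mid_inl (i : Fin 2) : IsMin (dsA P i) := by
  intro b hb
  cases b with
  | inl j =>
    obtain rfl : j = i := hb
    exact le_rfl
  | inr w => exact absurd hb mid_not_inr_le_inl

lemma bot_covBy_inl (i : Fin 2) : (⊥ : DSusp P) ⋖ (dsA P i : DSuspMid P) :=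
  WithBot.bot_covBy_coe.mpr (isMin_mid_inl i)

lemma covBy_bot_classify {z : DSusp P} (h : (⊥ : DSusp P) ⋖ z) :
    ∃ i : Fin 2, z = (dsA P i : DSuspMid P) := by
  cases z with
  | none => exact absurd h.1 (lt_irrefl _)
  | some u =>
    cases u with
    | inl i => exact ⟨i, rfl⟩
    | inr x =>
      exfalso
      have := WithBot.bot_covBy_coe.mp h
      exact mid_not_inr_le_inl (this (mid_inl_le_inr (i := 0)))

end DSuspLemmas
section RankEP

lemma rk_lt_of_lt {P : Type*} [Fintype P] [PartialOrder P] [OrderBot P] {rk : P → ℕ}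
    (hrk : IsRankFunction rk) : ∀ x z : P, z < x → rk z < rk x := by
  intro x
  induction x using WellFoundedLT.induction with
  | ind x IH =>
    intro z hz
    classical
    have hS : (Finset.univ.filter fun w => z ≤ w ∧ w < x).Nonempty :=
      ⟨z, by simp [hz]⟩
    obtain ⟨w, hwm⟩ := Finset.exists_maximal hS
    obtain ⟨hw, hmax'⟩ := hwm
    have hmax : ∀ u ∈ (Finset.univ.filter fun w => z ≤ w ∧ w < x), ¬ w < u :=
      fun u hu h => h.not_ge (hmax' hu h.le)
    simp only [Finset.mem_filter, Finset.mem_univ, true_and] at hw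
    have hcov : w ⋖ x := by
      refine ⟨hw.2, fun u hu1 hu2 => ?_⟩
      exact hmax u (by simp [le_trans hw.1 hu1.le, hu2]) hu1
    have hx : rk x = rk w + 1 := hrk.2 w x hcov
    rcases eq_or_lt_of_le hw.1 with rfl | hlt
    · omega
    · have := IH w hw.2 z hlt
      omega

lemma rk_pos_of_ne_bot {P : Type*} [Fintype P] [PartialOrder P] [OrderBot P] {rk : P → ℕ}
    (hrk : IsRankFunction rk) {x : P} (hx : x ≠ ⊥) : 1 ≤ rk x := by
  have := rk_lt_of_lt hrk x ⊥ (bot_lt_iff_ne_bot.mpr hx)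
  omega

lemma ep_iff {α : Type*} [Fintype α] [PartialOrder α] (rk : α → ℕ) (x y : α) :
    EulerPoincare rk x y ↔
      (∑ z : α, if x ≤ z ∧ z ≤ y then ((-1 : ℤ)) ^ (rk z) else 0) = 0 := by
  classical
  set s := Finset.univ.filter fun z : α => x ≤ z ∧ z ≤ y with hs
  have h1 : (∑ z : α, if x ≤ z ∧ z ≤ y then ((-1 : ℤ)) ^ (rk z) else 0)
      = ∑ z ∈ s, ((-1 : ℤ)) ^ (rk z) := (Finset.sum_filter _ _).symm
  have hA : ∑ z ∈ s.filter (fun z => Even (rk z)), ((-1 : ℤ)) ^ (rk z)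
      = (s.filter fun z => Even (rk z)).card := by
    rw [Finset.sum_congr rfl (fun z hz => Even.neg_one_pow (Finset.mem_filter.mp hz).2)]
    simp
  have hB : ∑ z ∈ s.filter (fun z => ¬ Even (rk z)), ((-1 : ℤ)) ^ (rk z)
      = -((s.filter fun z => ¬ Even (rk z)).card : ℤ) := by
    rw [Finset.sum_congr rfl (fun z hz =>
      Odd.neg_one_pow (Nat.not_even_iff_odd.mp (Finset.mem_filter.mp hz).2))]
    simp
  have h2 : ∑ z ∈ s, ((-1 : ℤ)) ^ (rk z)
      = ((s.filter fun z => Even (rk z)).card : ℤ)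
        - ((s.filter fun z => ¬ Even (rk z)).card : ℤ) := by
    rw [← Finset.sum_filter_add_sum_filter_not s (fun z => Even (rk z)), hA, hB]
    ring
  have e1 : Finset.univ.filter (fun z : α => x ≤ z ∧ z ≤ y ∧ Even (rk z))
      = s.filter (fun z => Even (rk z)) := by
    rw [hs, Finset.filter_filter]
    apply Finset.filter_congr
    intro z _
    tauto
  have e2 : Finset.univ.filter (fun z : α => x ≤ z ∧ z ≤ y ∧ ¬ Even (rk z))
      = s.filter (fun z => ¬ Even (rk z)) := by
    rw [hs, Finset.filter_filter]
    apply Finset.filter_congr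
    intro z _
    tauto
  rw [EulerPoincare, h1, h2, e1, e2, sub_eq_zero]
  exact ⟨fun h => by exact_mod_cast h, fun h => by exact_mod_cast h⟩

end RankEP
section Sums
variable {P : Type*} [Fintype P] [PartialOrder P] [OrderBot P]

lemma sum_dsusp (F : DSusp P → ℤ) :
    ∑ z : DSusp P, F z
      = F ⊥ + (F (dsA P 0) + F (dsA P 1)
          + ∑ x : {x : P // x ≠ ⊥}, F (dsE P x)) := by
  classical
  have h1 : ∑ z : DSusp P, F z = F ⊥ + ∑ u : DSuspMid P, F (u : DSuspMid P) :=
    Fintype.sum_option (fun z : Option (DSuspMid P) => F z)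
  rw [h1]
  congr 1
  have h2 : ∑ u : DSuspMid P, F (u : DSuspMid P)
      = ∑ v : Fin 2 ⊕ {x : P // x ≠ ⊥}, F ((show DSuspMid P from v : DSuspMid P) : DSusp P) :=
    Fintype.sum_equiv (Equiv.refl _) _ _ (fun _ => rfl)
  rw [h2, Fintype.sum_sum_type]
  congr 1
  exact Fin.sum_univ_two _

lemma sum_subtype_ne_bot (G : P → ℤ) :
    ∑ x : {x : P // x ≠ ⊥}, G x.1 = (∑ x : P, G x) - G ⊥ := by
  classical
  rw [← Finset.sum_subtype (Finset.univ.filter fun x : P => x ≠ ⊥) (by simp) G]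
  rw [Finset.filter_ne']
  exact Finset.sum_erase_eq_sub (Finset.mem_univ ⊥)

end Sums
section Eulerian
variable {P : Type*} [Fintype P] [PartialOrder P] [OrderBot P] {rk : P → ℕ}

@[simp] lemma dsuspRk_bot : dsuspRk rk (⊥ : DSusp P) = 0 := rfl
@[simp] lemma dsuspRk_inl (i : Fin 2) : dsuspRk rk ((dsA P i : DSuspMid P) : DSusp P) = 1 := rfl
@[simp] lemma dsuspRk_inr (x : {x : P // x ≠ ⊥}) :
    dsuspRk rk ((dsE P x : DSuspMid P) : DSusp P) = rk x.1 + 1 := rfl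

lemma neg_ite_zero (c : Prop) [Decidable c] (t : ℤ) : (if c then -t else 0) = -(if c then t else 0) := by
  split <;> simp

lemma subtype_sum_one (hrk : IsRankFunction rk) (hE : IsEulerian rk) (y : {x : P // x ≠ ⊥}) :
    ∑ x : {x : P // x ≠ ⊥}, (if x.1 ≤ y.1 then ((-1 : ℤ)) ^ (rk x.1 + 1) else 0) = 1 := by
  have hS : ∑ x : P, (if x ≤ y.1 then ((-1 : ℤ)) ^ (rk x) else 0) = 0 := by
    have := (ep_iff rk ⊥ y.1).mp (hE ⊥ y.1 (bot_lt_iff_ne_bot.mpr y.2))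
    simpa using this
  rw [sum_subtype_ne_bot (fun x => if x ≤ y.1 then ((-1 : ℤ)) ^ (rk x + 1) else 0)]
  have h1 : ∑ x : P, (if x ≤ y.1 then ((-1 : ℤ)) ^ (rk x + 1) else 0) = 0 := by
    have : ∀ x : P, (if x ≤ y.1 then ((-1 : ℤ)) ^ (rk x + 1) else 0)
        = -(if x ≤ y.1 then ((-1 : ℤ)) ^ (rk x) else 0) := by
      intro x
      rw [← neg_ite_zero]
      congr 1
      rw [pow_succ]
      ring
    rw [Finset.sum_congr rfl (fun x _ => this x), Finset.sum_neg_distrib, hS, neg_zero]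
  rw [h1, hrk.1]
  norm_num

lemma subtype_sum_zero (hE : IsEulerian rk) (x0 y : {x : P // x ≠ ⊥}) (hlt : x0.1 < y.1) :
    ∑ x : {x : P // x ≠ ⊥},
      (if x0.1 ≤ x.1 ∧ x.1 ≤ y.1 then ((-1 : ℤ)) ^ (rk x.1 + 1) else 0) = 0 := by
  have hS : ∑ x : P, (if x0.1 ≤ x ∧ x ≤ y.1 then ((-1 : ℤ)) ^ (rk x) else 0) = 0 :=
    (ep_iff rk x0.1 y.1).mp (hE x0.1 y.1 hlt)
  rw [sum_subtype_ne_bot (fun x => if x0.1 ≤ x ∧ x ≤ y.1 then ((-1 : ℤ)) ^ (rk x + 1) else 0)]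
  have h1 : ∑ x : P, (if x0.1 ≤ x ∧ x ≤ y.1 then ((-1 : ℤ)) ^ (rk x + 1) else 0) = 0 := by
    have : ∀ x : P, (if x0.1 ≤ x ∧ x ≤ y.1 then ((-1 : ℤ)) ^ (rk x + 1) else 0)
        = -(if x0.1 ≤ x ∧ x ≤ y.1 then ((-1 : ℤ)) ^ (rk x) else 0) := by
      intro x
      rw [← neg_ite_zero]
      congr 1
      rw [pow_succ]
      ring
    rw [Finset.sum_congr rfl (fun x _ => this x), Finset.sum_neg_distrib, hS, neg_zero]
  rw [h1]
  have : ¬ x0.1 ≤ (⊥ : P) := fun h => x0.2 (le_bot_iff.mp h)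
  simp [this]


lemma inl_eq_dsA (i : Fin 2) : Sum.inl i = dsA P i := rfl
lemma inr_eq_dsE (x : {x : P // x ≠ ⊥}) : Sum.inr x = dsE P x := rfl

lemma dsusp_eulerian (hrk : IsRankFunction rk) (hE : IsEulerian rk) :
    IsEulerian (dsuspRk rk) := by
  intro a b hab
  rw [ep_iff]
  rw [sum_dsusp]
  cases a with
  | none =>
    cases b with
    | none => exact absurd hab (lt_irrefl _)
    | some u =>
      cases u with
      | inl i =>
        have hni : ∀ x : {x : P // x ≠ ⊥}, ¬ (dsE P x ≤ dsA P i) := fun x => mid_not_inr_le_inl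
        simp only [inl_eq_dsA (P := P), inr_eq_dsE (P := P), WithBot.none_eq_bot, WithBot.some_eq_coe, bot_le, true_and,
          WithBot.coe_le_coe, le_refl, mid_inl_le_inl_iff, mid_inl_le_inr, hni,
          dsuspRk_bot, dsuspRk_inl, dsuspRk_inr, if_true, if_false, pow_zero, pow_one,
          Finset.sum_const, smul_zero]
        fin_cases i <;> norm_num [Fin.ext_iff]
      | inr y =>
        simp only [inl_eq_dsA (P := P), inr_eq_dsE (P := P), WithBot.none_eq_bot, WithBot.some_eq_coe, bot_le, true_and,
          WithBot.coe_le_coe, le_refl, mid_inl_le_inr, mid_inr_le_inr_iff,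
          dsuspRk_bot, dsuspRk_inl, dsuspRk_inr, if_true, pow_zero, pow_one]
        rw [subtype_sum_one hrk hE y]
        norm_num
  | some u =>
    cases b with
    | none => exact absurd hab not_lt_bot
    | some v =>
      have huv : u < v := WithBot.coe_lt_coe.mp hab
      cases u with
      | inl i =>
        cases v with
        | inl j =>
          obtain rfl : i = j := huv.le
          exact absurd huv (lt_irrefl _)
        | inr y =>
          have hb : ¬ ((dsA P i : DSuspMid P) : DSusp P) ≤ (⊥ : DSusp P) :=
            WithBot.not_coe_le_bot _
          simp only [inl_eq_dsA (P := P), inr_eq_dsE (P := P), WithBot.none_eq_bot, WithBot.some_eq_coe, bot_le, true_and, and_true,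
            WithBot.coe_le_coe, le_refl, mid_inl_le_inl_iff, mid_inl_le_inr, hb,
            mid_inr_le_inr_iff, dsuspRk_bot, dsuspRk_inl, dsuspRk_inr,
            if_true, if_false, false_and, pow_zero, pow_one]
          rw [subtype_sum_one hrk hE y]
          fin_cases i <;> norm_num [Fin.ext_iff]
      | inr x0 =>
        cases v with
        | inl j => exact absurd huv.le mid_not_inr_le_inl
        | inr y =>
          have hlt : x0.1 < y.1 := mid_inr_lt_inr_iff.mp huv
          have hb : ¬ ((dsE P x0 : DSuspMid P) : DSusp P) ≤ (⊥ : DSusp P) :=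
            WithBot.not_coe_le_bot _
          have hni : ∀ j : Fin 2, ¬ (dsE P x0 ≤ dsA P j) := fun j => mid_not_inr_le_inl
          simp only [inl_eq_dsA (P := P), inr_eq_dsE (P := P), WithBot.none_eq_bot, WithBot.some_eq_coe, bot_le, true_and, and_true,
            WithBot.coe_le_coe, le_refl, hb, hni, mid_inr_le_inr_iff,
            dsuspRk_bot, dsuspRk_inl, dsuspRk_inr, if_true, if_false, false_and,
            pow_zero, pow_one]
          rw [subtype_sum_zero hE x0 y hlt]
          norm_num

end Eulerian
section Transfer
variable {P : Type*} [PartialOrder P] [OrderBot P]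

/-- Map `P` into the dual suspension, sending `⊥` to the `i`-th new atom. -/
noncomputable def fmap (i : Fin 2) : P → DSusp P := fun z =>
  if h : z = ⊥ then ((dsA P i : DSuspMid P) : DSusp P) else ((dsE P ⟨z, h⟩ : DSuspMid P) : DSusp P)

/-- Map the dual suspension back onto `P`. -/
def gmap : DSusp P → P :=
  WithBot.recBotCoe ⊥ (Sum.elim (fun _ => (⊥ : P)) (fun x => x.1))

@[simp] lemma fmap_bot (i : Fin 2) : fmap i (⊥ : P) = ((dsA P i : DSuspMid P) : DSusp P) :=
  dif_pos rfl

lemma fmap_ne (i : Fin 2) (x : {x : P // x ≠ ⊥}) :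
    fmap i x.1 = ((dsE P x : DSuspMid P) : DSusp P) := by
  rw [fmap, dif_neg x.2]

@[simp] lemma gmap_bot : gmap (⊥ : DSusp P) = (⊥ : P) := rfl
@[simp] lemma gmap_inl (i : Fin 2) : gmap ((dsA P i : DSuspMid P) : DSusp P) = (⊥ : P) := rfl
@[simp] lemma gmap_inr (x : {x : P // x ≠ ⊥}) :
    gmap ((dsE P x : DSuspMid P) : DSusp P) = x.1 := rfl

lemma gmap_fmap (i : Fin 2) (z : P) : gmap (fmap i z) = z := by
  by_cases h : z = ⊥
  · subst h; simp
  · rw [fmap, dif_neg h]; rfl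

lemma fmap_covBy (i : Fin 2) {u v : P} (h : u ⋖ v) : fmap i u ⋖ fmap i v := by
  by_cases hu : u = ⊥
  · subst hu
    have hv : v ≠ ⊥ := h.lt.ne'
    rw [fmap_bot, fmap, dif_neg hv]
    exact WithBot.coe_covBy_coe.mpr (mid_covBy_inl_inr.mpr h)
  · have hv : v ≠ ⊥ := ne_bot_of_gt h.lt
    rw [fmap, dif_neg hu, fmap, dif_neg hv]
    exact WithBot.coe_covBy_coe.mpr (mid_covBy_inr_inr.mpr h)

lemma satChain_map_up (i : Fin 2) {x y : P} {l : List P} (h : IsSatChain x y l) :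
    IsSatChain (fmap i x) (fmap i y) (l.map (fmap i)) := by
  refine ⟨List.isChain_map_of_isChain _ (fun a b hab => fmap_covBy i hab) h.1, ?_, ?_⟩
  · rw [List.head?_map, h.2.1, Option.map_some]
  · rw [List.getLast?_map, h.2.2, Option.map_some]

lemma elem_classify_inl {i : Fin 2} {z : DSusp P}
    (hz : ((dsA P i : DSuspMid P) : DSusp P) ≤ z) :
    z = ((dsA P i : DSuspMid P) : DSusp P) ∨ ∃ w, z = ((dsE P w : DSuspMid P) : DSusp P) := by
  cases z with
  | none => exact absurd hz (WithBot.not_coe_le_bot _)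
  | some u =>
    cases u with
    | inl j =>
      obtain rfl : i = j := WithBot.coe_le_coe.mp hz
      exact Or.inl rfl
    | inr w => exact Or.inr ⟨w, rfl⟩

lemma elem_classify_inr {x : {x : P // x ≠ ⊥}} {z : DSusp P}
    (hz : ((dsE P x : DSuspMid P) : DSusp P) ≤ z) :
    ∃ w, z = ((dsE P w : DSuspMid P) : DSusp P) := by
  cases z with
  | none => exact absurd hz (WithBot.not_coe_le_bot _)
  | some u =>
    cases u with
    | inl j => exact absurd (WithBot.coe_le_coe.mp hz) mid_not_inr_le_inl
    | inr w => exact ⟨w, rfl⟩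

lemma gmap_covBy_of_up {z z' : DSusp P}
    (hz : (∃ i : Fin 2, z = ((dsA P i : DSuspMid P) : DSusp P)) ∨
          ∃ w, z = ((dsE P w : DSuspMid P) : DSusp P))
    (hz' : ∃ w, z' = ((dsE P w : DSuspMid P) : DSusp P))
    (h : z ⋖ z') : gmap z ⋖ gmap z' := by
  obtain ⟨w', rfl⟩ := hz'
  rcases hz with ⟨i, rfl⟩ | ⟨w, rfl⟩
  · simpa using mid_covBy_inl_inr.mp (WithBot.coe_covBy_coe.mp h)
  · simpa using mid_covBy_inr_inr.mp (WithBot.coe_covBy_coe.mp h)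

lemma satChain_down_inl {i : Fin 2} {b : {x : P // x ≠ ⊥}} {l : List (DSusp P)}
    (h : IsSatChain ((dsA P i : DSuspMid P) : DSusp P) ((dsE P b : DSuspMid P) : DSusp P) l) :
    IsSatChain (⊥ : P) b.1 (l.map gmap) := by
  have hbd := satChain_bounds h
  refine ⟨chain'_map_mem gmap (fun a ha c hc hac => ?_) h.1, ?_, ?_⟩
  · refine gmap_covBy_of_up ?_ ?_ hac
    · rcases elem_classify_inl (hbd a ha).1 with h1 | ⟨w, h1⟩
      · exact Or.inl ⟨i, h1⟩
      · exact Or.inr ⟨w, h1⟩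
    · rcases elem_classify_inl (hbd c hc).1 with h1 | ⟨w, h1⟩
      · -- c = A i, but a < c and a ≥ A i gives A i < A i, contradiction
        exfalso
        have hac' : a < c := hac.lt
        have := lt_of_le_of_lt (hbd a ha).1 hac'
        rw [h1] at this
        exact lt_irrefl _ this
      · exact ⟨w, h1⟩
  · rw [List.head?_map, h.2.1, Option.map_some, gmap_inl]
  · rw [List.getLast?_map, h.2.2, Option.map_some, gmap_inr]

lemma satChain_down_inr {a b : {x : P // x ≠ ⊥}} {l : List (DSusp P)}
    (h : IsSatChain ((dsE P a : DSuspMid P) : DSusp P) ((dsE P b : DSuspMid P) : DSusp P) l) :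
    IsSatChain a.1 b.1 (l.map gmap) := by
  have hbd := satChain_bounds h
  refine ⟨chain'_map_mem gmap (fun u hu c hc huc => ?_) h.1, ?_, ?_⟩
  · exact gmap_covBy_of_up (Or.inr (elem_classify_inr (hbd u hu).1))
      (elem_classify_inr (hbd c hc).1) huc
  · rw [List.head?_map, h.2.1, Option.map_some, gmap_inr]
  · rw [List.getLast?_map, h.2.2, Option.map_some, gmap_inr]

lemma fmap_gmap_inl {i : Fin 2} {b : {x : P // x ≠ ⊥}} {z : DSusp P}
    (h1 : ((dsA P i : DSuspMid P) : DSusp P) ≤ z) : fmap i (gmap z) = z := by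
  rcases elem_classify_inl h1 with rfl | ⟨w, rfl⟩
  · rw [gmap_inl, fmap_bot]
  · rw [gmap_inr, fmap_ne]

lemma chainCount_inl_inr (i : Fin 2) (b : {x : P // x ≠ ⊥}) :
    chainCount ((dsA P i : DSuspMid P) : DSusp P) ((dsE P b : DSuspMid P) : DSusp P)
      = chainCount (⊥ : P) b.1 := by
  refine chainCount_congr gmap (fmap i) (fun l h => satChain_down_inl h) (fun l h => ?_)
    (fun l h z hz => fmap_gmap_inl (b := b) (satChain_bounds h z hz).1)
    (fun l h z hz => gmap_fmap i z)
  have := satChain_map_up i h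
  rwa [fmap_bot, fmap_ne] at this

lemma chainCount_inr_inr (a b : {x : P // x ≠ ⊥}) :
    chainCount ((dsE P a : DSuspMid P) : DSusp P) ((dsE P b : DSuspMid P) : DSusp P)
      = chainCount a.1 b.1 := by
  refine chainCount_congr gmap (fmap 0) (fun l h => satChain_down_inr h) (fun l h => ?_)
    (fun l h z hz => ?_) (fun l h z hz => gmap_fmap 0 z)
  · have := satChain_map_up 0 h
    rwa [fmap_ne, fmap_ne] at this
  · obtain ⟨w, rfl⟩ := elem_classify_inr (satChain_bounds h z hz).1
    rw [gmap_inr, fmap_ne]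

lemma chainCount_bot_inl (i : Fin 2) :
    chainCount (⊥ : DSusp P) ((dsA P i : DSuspMid P) : DSusp P) = 1 := by
  refine chainCount_eq_one_of_unique [⊥, ((dsA P i : DSuspMid P) : DSusp P)]
    ⟨List.isChain_pair.mpr (bot_covBy_inl i), rfl, rfl⟩ (fun l h => ?_)
  obtain ⟨t, rfl⟩ := satChain_cons h
  rcases satChain_cons_decomp h with ⟨rfl, habs⟩ | ⟨c, t', rfl, hcov, hsat⟩
  · exact absurd habs (WithBot.bot_ne_coe)
  · obtain ⟨j, rfl⟩ := covBy_bot_classify hcov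
    have hcb : ((dsA P j : DSuspMid P) : DSusp P) ≤ ((dsA P i : DSuspMid P) : DSusp P) :=
      satChain_le hsat
    obtain rfl : j = i := WithBot.coe_le_coe.mp hcb
    rw [satChain_self_eq hsat]

/-- Extract the index of the atom used by a saturated chain starting at `⊥`. -/
def idx : List (DSusp P) → Fin 2 := fun l =>
  match l with
  | _ :: (Option.some (Sum.inl i)) :: _ => i
  | _ => 0

lemma sat_bot_decomp {b : {x : P // x ≠ ⊥}} {l : List (DSusp P)}
    (h : IsSatChain (⊥ : DSusp P) ((dsE P b : DSuspMid P) : DSusp P) l) :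
    ∃ (i : Fin 2) (t : List (DSusp P)), l = ⊥ :: ((dsA P i : DSuspMid P) : DSusp P) :: t ∧
      IsSatChain ((dsA P i : DSuspMid P) : DSusp P) ((dsE P b : DSuspMid P) : DSusp P)
        (((dsA P i : DSuspMid P) : DSusp P) :: t) := by
  obtain ⟨t, rfl⟩ := satChain_cons h
  rcases satChain_cons_decomp h with ⟨rfl, habs⟩ | ⟨c, t', rfl, hcov, hsat⟩
  · exact absurd habs (WithBot.bot_ne_coe)
  · obtain ⟨j, rfl⟩ := covBy_bot_classify hcov
    exact ⟨j, t', rfl, hsat⟩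

lemma chainCount_bot_inr (b : {x : P // x ≠ ⊥}) :
    chainCount (⊥ : DSusp P) ((dsE P b : DSuspMid P) : DSusp P)
      = 2 * chainCount (⊥ : P) b.1 := by
  have e : {l : List (DSusp P) //
      IsSatChain (⊥ : DSusp P) ((dsE P b : DSuspMid P) : DSusp P) l}
      ≃ Fin 2 × {m : List P // IsSatChain (⊥ : P) b.1 m} := by
    refine ⟨fun p => ⟨idx p.1, ⟨(p.1.drop 1).map gmap, ?_⟩⟩,
      fun q => ⟨(⊥ : DSusp P) :: (q.2.1.map (fmap q.1)), ?_⟩, ?_, ?_⟩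
    · obtain ⟨i, t, heq, hsat⟩ := sat_bot_decomp p.2
      rw [heq, List.drop_one, List.tail_cons]
      exact satChain_down_inl hsat
    · obtain ⟨i, ⟨m, hm⟩⟩ := q
      have hup := satChain_map_up i hm
      rw [fmap_bot, fmap_ne] at hup
      exact satChain_of_cons (bot_covBy_inl i) hup
    · rintro ⟨l, hl⟩
      obtain ⟨i, t, heq, hsat⟩ := sat_bot_decomp hl
      refine Subtype.ext ?_
      simp only [heq, List.drop_one, List.tail_cons]
      have hidx : idx (⊥ :: ((dsA P i : DSuspMid P) : DSusp P) :: t) = i := rfl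
      rw [hidx, List.map_map]
      congr 1
      refine (List.map_congr_left ?_).trans (List.map_id _)
      intro z hz
      exact fmap_gmap_inl (b := b) (satChain_bounds hsat z hz).1
    · rintro ⟨i, ⟨m, hm⟩⟩
      obtain ⟨m', rfl⟩ := satChain_cons hm
      refine Prod.ext ?_ (Subtype.ext ?_)
      · dsimp only
        rw [List.map_cons, fmap_bot]
        rfl
      · dsimp only
        rw [List.map_cons, fmap_bot, List.drop_one, List.tail_cons, List.map_cons, gmap_inl,
          List.map_map]
        exact congrArg (List.cons ⊥)
          ((List.map_congr_left fun z _ => gmap_fmap i z).trans (List.map_id _))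
  rw [chainCount, Nat.card_congr e, Nat.card_prod]
  congr 1
  rw [Nat.card_eq_fintype_card, Fintype.card_fin]

end Transfer
/-- If `P` is Eulerian then its dual suspension `Σ*(P)` is Eulerian;
moreover if `P` is binomial with factorial function `B`, then `Σ*(P)` is a Sheffer poset with
Sheffer factorial function `D n = 2 * B (n - 1)` for `n ≥ 2`. -/
theorem statement10 {P : Type*} [Fintype P] [PartialOrder P] [OrderBot P]
    (rk : P → ℕ) (hrk : IsRankFunction rk) (hE : IsEulerian rk) :
    IsEulerian (dsuspRk rk) ∧
      ∀ B : ℕ → ℕ, IsBinomial rk B →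
        ∃ D : ℕ → ℕ, IsSheffer (dsuspRk rk) B D ∧ ∀ n, 2 ≤ n → D n = 2 * B (n - 1) := by
  refine ⟨dsusp_eulerian hrk hE, ?_⟩
  intro B hB
  have hB0 : B 0 = 1 := by
    have h := hB ⊥ ⊥ le_rfl
    rw [chainCount_self, Nat.sub_self] at h
    omega
  refine ⟨fun n => if n ≤ 1 then 1 else 2 * B (n - 1), ⟨?_, ?_⟩, ?_⟩
  · intro y
    cases y with
    | none =>
      simp only [WithBot.none_eq_bot]
      rw [chainCount_self]
      simp
    | some u =>
      cases u with
      | inl i =>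
        simp only [WithBot.some_eq_coe, inl_eq_dsA (P := P)]
        rw [chainCount_bot_inl]; simp only [dsuspRk_inl]
        simp
      | inr x =>
        simp only [WithBot.some_eq_coe, inr_eq_dsE (P := P)]
        rw [chainCount_bot_inr]; simp only [dsuspRk_inr]
        have hpos : 1 ≤ rk x.1 := rk_pos_of_ne_bot hrk x.2
        have hbx := hB ⊥ x.1 bot_le
        rw [hrk.1, Nat.sub_zero] at hbx
        rw [hbx]; refine Eq.trans ?_ (if_neg (show ¬ rk x.1 + 1 ≤ 1 by omega)).symm
        congr 1 <;> omega
  · intro x y hx hxy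
    cases x with
    | none => exact absurd rfl hx
    | some u =>
      cases y with
      | none => exact absurd hxy (WithBot.not_coe_le_bot _)
      | some v =>
        have huv : u ≤ v := WithBot.coe_le_coe.mp hxy
        cases u with
        | inl i =>
          cases v with
          | inl j =>
            obtain rfl : i = j := huv
            simp only [WithBot.some_eq_coe, inl_eq_dsA (P := P)]
            rw [chainCount_self, dsuspRk_inl, Nat.sub_self, hB0]
          | inr y' =>
            simp only [WithBot.some_eq_coe, inl_eq_dsA, inr_eq_dsE (P := P)]
            rw [chainCount_inl_inr, dsuspRk_inl, dsuspRk_inr]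
            have hby := hB ⊥ y'.1 bot_le
            rw [hrk.1, Nat.sub_zero] at hby
            rw [hby]
            congr 1 <;> omega
        | inr x' =>
          cases v with
          | inl j => exact absurd huv mid_not_inr_le_inl
          | inr y' =>
            simp only [WithBot.some_eq_coe, inr_eq_dsE (P := P)]
            rw [chainCount_inr_inr, dsuspRk_inr, dsuspRk_inr]
            have hby := hB x'.1 y'.1 (mid_inr_le_inr_iff.mp huv)
            rw [hby]
            congr 1 <;> omega
  · intro n hn
    have h1 : ¬ n ≤ 1 := by omega
    simp [h1]
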